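/- In a Rauzy class with involution on an alphabet with d involution classes, any path γ in the Rauzy diagram that is a concatenation of 2d−3 complete paths is positive, i.e., the associated matrix B_γ ∈ SL(A/i, ℤ) has all entries strictly positive. -/

import Mathlib

open Finset

namespace Rauzy

/-- The alphabet with `2*d` letters. -/
abbrev Letter (d : ℕ) := Fin (2*d)
/-- Positions `1, …, 2d+1` (0-indexed). -/
abbrev Pos (d : ℕ) := Fin (2*d+1)
/-- Combinatorial data: a bijection from `A ∪ {*}` (with `none = *`) to positions. -/
abbrev RPerm (d : ℕ) := Option (Letter d) ≃ Pos d

/-- A fixed-point-free involution of the alphabet. -/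
structure Inv (d : ℕ) where
  i : Letter d → Letter d
  invol : ∀ a, i (i a) = a
  nofix : ∀ a, i a ≠ a

variable {d : ℕ}

/-- Admissibility: neither `i(A_l) ⊆ A_r` nor `i(A_r) ⊆ A_l`. -/
def Admissible (I : Inv d) (π : RPerm d) : Prop :=
  ¬ (∀ a : Letter d, π (some a) < π none → π none < π (some (I.i a))) ∧
  ¬ (∀ a : Letter d, π none < π (some a) → π (some (I.i a)) < π none)

/-- A vector indexed by letters represents a vector indexed by involution classes
iff it is symmetric under the involution. -/
def Sym (I : Inv d) (v : Letter d → ℝ) : Prop := ∀ a, v (I.i a) = v a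

/-- The balance condition defining the hyperplane `S_π`. -/
def Balanced (π : RPerm d) (v : Letter d → ℝ) : Prop :=
  ∑ a ∈ univ.filter (fun a => π (some a) < π none), v a
    = ∑ a ∈ univ.filter (fun a => π none < π (some a)), v a

def Positive (v : Letter d → ℝ) : Prop := ∀ a, 0 < v a

/-- Membership in `S_π` (as a vector in `ℝ^{A/i}`, in letter coordinates). -/
def MemS (I : Inv d) (π : RPerm d) (v : Letter d → ℝ) : Prop := Sym I v ∧ Balanced π v

/-- The open cone `Θ_π` of admissible suspension data. -/
def MemTheta (I : Inv d) (π : RPerm d) (τ : Letter d → ℝ) : Prop :=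
  MemS I π τ ∧
  (∀ k : Pos d, π none < k → (k : ℕ) < 2*d →
    0 < ∑ a ∈ univ.filter (fun a => π none < π (some a) ∧ π (some a) ≤ k), τ a) ∧
  (∀ k : Pos d, 0 < (k : ℕ) → k < π none →
    ∑ a ∈ univ.filter (fun a => k ≤ π (some a) ∧ π (some a) < π none), τ a < 0)

/-- The cone `Θ'_π`: non-strict inequalities, excluding `0`. -/
def MemTheta' (I : Inv d) (π : RPerm d) (τ : Letter d → ℝ) : Prop :=
  MemS I π τ ∧ τ ≠ 0 ∧
  (∀ k : Pos d, π none < k → (k : ℕ) < 2*d →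
    0 ≤ ∑ a ∈ univ.filter (fun a => π none < π (some a) ∧ π (some a) ≤ k), τ a) ∧
  (∀ k : Pos d, 0 < (k : ℕ) → k < π none →
    ∑ a ∈ univ.filter (fun a => k ≤ π (some a) ∧ π (some a) < π none), τ a ≤ 0)

/-- The linear operator `Ω(π)` applied to a vector:
`(Ω(π)·v)_α = Σ_{π(ξ)>π(i(α))} v_ξ − Σ_{π(ξ)<π(α)} v_ξ`. -/
def omegaApply (I : Inv d) (π : RPerm d) (v : Letter d → ℝ) (a : Letter d) : ℝ :=
  (∑ x ∈ univ.filter (fun x => π (some (I.i a)) < π (some x)), v x)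
  - ∑ x ∈ univ.filter (fun x => π (some x) < π (some a)), v x

/-- The left operation: the rightmost letter `β` is inserted immediately after `i(α)`,
where `α` is the leftmost letter; both permutations are admissible. -/
def LeftOpTo (I : Inv d) (π π' : RPerm d) : Prop :=
  Admissible I π ∧ Admissible I π' ∧
  ∃ α β : Letter d, π (some α) = 0 ∧ π (some β) = Fin.last (2*d) ∧ β ≠ I.i α ∧
    (∀ x, π x ≤ π (some (I.i α)) → π' x = π x) ∧
    ((π' (some β) : ℕ) = (π (some (I.i α)) : ℕ) + 1) ∧
    (∀ x, x ≠ some β → π (some (I.i α)) < π x → (π' x : ℕ) = (π x : ℕ) + 1)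

/-- The right operation: the leftmost letter `α` is inserted immediately before `i(β)`,
where `β` is the rightmost letter; both permutations are admissible. -/
def RightOpTo (I : Inv d) (π π' : RPerm d) : Prop :=
  Admissible I π ∧ Admissible I π' ∧
  ∃ α β : Letter d, π (some α) = 0 ∧ π (some β) = Fin.last (2*d) ∧ α ≠ I.i β ∧
    (∀ x, π (some (I.i β)) ≤ π x → π' x = π x) ∧
    ((π' (some α) : ℕ) + 1 = (π (some (I.i β)) : ℕ)) ∧
    (∀ x, x ≠ some α → π x < π (some (I.i β)) → (π' x : ℕ) + 1 = (π x : ℕ))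

/-- An arrow of the Rauzy diagram with involution, with its winner and loser. -/
structure Arrow (d : ℕ) (I : Inv d) where
  src : RPerm d
  dst : RPerm d
  winner : Letter d
  loser : Letter d
  ok : (LeftOpTo I src dst ∧ src (some winner) = 0 ∧ src (some loser) = Fin.last (2*d))
     ∨ (RightOpTo I src dst ∧ src (some loser) = 0 ∧ src (some winner) = Fin.last (2*d))

/-- A list of arrows is a path if consecutive arrows match. -/
def IsPathList (I : Inv d) (l : List (Arrow d I)) : Prop :=
  l.Chain' (fun a b => a.dst = b.src)

/-- `B_γ` for an arrow `γ`: `B·e_ξ̲ = e_ξ̲` for `ξ̲ ≠ α̲` and `B·e_α̲ = e_α̲ + e_β̲`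
(winner `α`, loser `β`), acting on vectors in letter coordinates. -/
def arrowB (I : Inv d) (a : Arrow d I) (v : Letter d → ℝ) : Letter d → ℝ :=
  fun x => v x + (if x = a.loser ∨ x = I.i a.loser then v a.winner else 0)

/-- The transpose `B*_γ` for an arrow `γ`. -/
def arrowBt (I : Inv d) (a : Arrow d I) (v : Letter d → ℝ) : Letter d → ℝ :=
  fun x => v x + (if x = a.winner ∨ x = I.i a.winner then v a.loser else 0)

/-- The inverse transpose `(B*_γ)⁻¹` for an arrow `γ`. -/
def arrowBtInv (I : Inv d) (a : Arrow d I) (v : Letter d → ℝ) : Letter d → ℝ :=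
  fun x => v x - (if x = a.winner ∨ x = I.i a.winner then v a.loser else 0)

/-- `B_γ = B_{γ_n} ⋯ B_{γ_1}` for a path `γ = γ_1 … γ_n`. -/
def pathB (I : Inv d) (l : List (Arrow d I)) (v : Letter d → ℝ) : Letter d → ℝ :=
  l.foldl (fun w a => arrowB I a w) v

/-- `B*_γ = B*_{γ_1} ⋯ B*_{γ_n}`. -/
def pathBt (I : Inv d) (l : List (Arrow d I)) (v : Letter d → ℝ) : Letter d → ℝ :=
  l.foldr (fun a w => arrowBt I a w) v

/-- `(B*_γ)⁻¹ = (B*_{γ_n})⁻¹ ⋯ (B*_{γ_1})⁻¹`. -/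
def pathBtInv (I : Inv d) (l : List (Arrow d I)) (v : Letter d → ℝ) : Letter d → ℝ :=
  l.foldl (fun w a => arrowBtInv I a w) v

/-- The canonical basis vector of `ℝ^{A/i}` for the class of `y`, in letter coordinates. -/
def classBasis (I : Inv d) (y : Letter d) : Letter d → ℝ :=
  fun x => if x = y ∨ x = I.i y then 1 else 0

/-- A path is positive if all the entries of the matrix `B_γ` (over classes) are positive. -/
def PositivePath (I : Inv d) (l : List (Arrow d I)) : Prop :=
  ∀ x y : Letter d, 0 < pathB I l (classBasis I y) x

/-- A path is complete if every involution class is the winner of some arrow. -/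
def CompletePath (I : Inv d) (l : List (Arrow d I)) : Prop :=
  ∀ x : Letter d, ∃ a ∈ l, a.winner = x ∨ a.winner = I.i x

/-- A `k`-complete path is a concatenation of `k` complete paths. -/
def KComplete (I : Inv d) (k : ℕ) (l : List (Arrow d I)) : Prop :=
  ∃ ls : List (List (Arrow d I)), ls.length = k ∧ l = ls.flatten ∧ ∀ s ∈ ls, CompletePath I s

/-- Invariance of a set of permutations under the left and right operations. -/
def OpInvariant (I : Inv d) (R : Set (RPerm d)) : Prop :=
  ∀ π ∈ R, ∀ π', (LeftOpTo I π π' ∨ RightOpTo I π π') → π' ∈ R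

/-- A Rauzy class with involution: a minimal nonempty invariant set of admissible
permutations in which every involution class wins some arrow. -/
def IsRauzyClass (I : Inv d) (R : Set (RPerm d)) : Prop :=
  R.Nonempty ∧ (∀ π ∈ R, Admissible I π) ∧ OpInvariant I R ∧
  (∀ R' ⊆ R, R'.Nonempty → OpInvariant I R' → R' = R) ∧
  (∀ x : Letter d, ∃ a : Arrow d I, a.src ∈ R ∧ a.dst ∈ R ∧
    (a.winner = x ∨ a.winner = I.i x))

/-- A permutation is irreducible if it belongs to a Rauzy class with involution. -/
def Irreducible (I : Inv d) (π : RPerm d) : Prop :=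
  ∃ R, IsRauzyClass I R ∧ π ∈ R

/-- The vector `v_π = Σ_{π(x)<π(*)} e_x̲ − Σ_{π(x)>π(*)} e_x̲`, in letter coordinates. -/
def vpi (I : Inv d) (π : RPerm d) (x : Letter d) : ℝ :=
  (if π (some x) < π none then 1 else -1) + (if π (some (I.i x)) < π none then 1 else -1)


section PositivityProof

variable {d : ℕ} {I : Inv d}

private lemma i_inj (I : Inv d) {a b : Letter d} (h : I.i a = I.i b) : a = b := by
  have := congrArg I.i h
  rwa [I.invol, I.invol] at this

private lemma zero_ne_last (a : Letter d) : (0 : Pos d) ≠ Fin.last (2*d) := by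
  have := a.isLt
  simp only [ne_eq, Fin.ext_iff, Fin.val_zero, Fin.val_last]
  omega

private lemma dst_winner_of_left (a : Arrow d I)
    (h : LeftOpTo I a.src a.dst) (hw : a.src (some a.winner) = 0) :
    a.dst (some a.winner) = 0 := by
  obtain ⟨-, -, α, β, hα, hβ, -, hpre, -, -⟩ := h
  have hα' : α = a.winner := Option.some.inj (a.src.injective (hα.trans hw.symm))
  subst hα'
  rw [hpre (some a.winner) (by rw [hα]; exact Fin.zero_le _)]
  exact hα

private lemma dst_winner_of_right (a : Arrow d I)
    (h : RightOpTo I a.src a.dst) (hw : a.src (some a.winner) = Fin.last (2*d)) :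
    a.dst (some a.winner) = Fin.last (2*d) := by
  obtain ⟨-, -, α, β, hα, hβ, -, hpre, -, -⟩ := h
  have hβ' : β = a.winner := Option.some.inj (a.src.injective (hβ.trans hw.symm))
  subst hβ'
  rw [hpre (some a.winner) (by rw [hβ]; exact Fin.le_last _)]
  exact hβ

private lemma loser_ne_winner (a : Arrow d I) :
    a.loser ≠ a.winner ∧ a.loser ≠ I.i a.winner := by
  have h0l : (0 : Pos d) ≠ Fin.last (2*d) := zero_ne_last a.winner
  rcases a.ok with ⟨⟨-, -, α, β, hα, hβ, hne, -, -, -⟩, hw, hl⟩ |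
    ⟨⟨-, -, α, β, hα, hβ, hne, -, -, -⟩, hl, hw⟩
  · have hα' : α = a.winner := Option.some.inj (a.src.injective (hα.trans hw.symm))
    have hβ' : β = a.loser := Option.some.inj (a.src.injective (hβ.trans hl.symm))
    subst hα'; subst hβ'
    exact ⟨fun h => h0l (by rw [← hw, ← h]; exact hl), hne⟩
  · have hα' : α = a.loser := Option.some.inj (a.src.injective (hα.trans hl.symm))
    have hβ' : β = a.winner := Option.some.inj (a.src.injective (hβ.trans hw.symm))
    subst hα'; subst hβ'
    exact ⟨fun h => h0l (by rw [← hl, h]; exact hw), hne⟩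

private lemma winner_mem_next (a b : Arrow d I) (h : a.dst = b.src) :
    a.winner = b.winner ∨ a.winner = b.loser := by
  have hpos : a.dst (some a.winner) = 0 ∨ a.dst (some a.winner) = Fin.last (2*d) := by
    rcases a.ok with ⟨hop, hw, -⟩ | ⟨hop, -, hw⟩
    · exact Or.inl (dst_winner_of_left a hop hw)
    · exact Or.inr (dst_winner_of_right a hop hw)
  rw [h] at hpos
  rcases b.ok with ⟨-, hw, hl⟩ | ⟨-, hl, hw⟩ <;> rcases hpos with h0 | h0
  · exact Or.inl (Option.some.inj (b.src.injective (h0.trans hw.symm)))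
  · exact Or.inr (Option.some.inj (b.src.injective (h0.trans hl.symm)))
  · exact Or.inr (Option.some.inj (b.src.injective (h0.trans hl.symm)))
  · exact Or.inl (Option.some.inj (b.src.injective (h0.trans hw.symm)))

private lemma pathB_cons (a : Arrow d I) (m : List (Arrow d I)) (v : Letter d → ℝ) :
    pathB I (a :: m) v = pathB I m (arrowB I a v) := rfl

private lemma pathB_append (m m' : List (Arrow d I)) (v : Letter d → ℝ) :
    pathB I (m ++ m') v = pathB I m' (pathB I m v) :=
  List.foldl_append

private lemma le_arrowB (a : Arrow d I) {v : Letter d → ℝ} (h : ∀ z, 0 ≤ v z) (z : Letter d) :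
    v z ≤ arrowB I a v z := by
  have h1 : 0 ≤ (if z = a.loser ∨ z = I.i a.loser then v a.winner else 0) := by
    split
    · exact h _
    · exact le_refl 0
  simp only [arrowB]
  linarith

private lemma pathB_mono (m : List (Arrow d I)) :
    ∀ {v : Letter d → ℝ}, (∀ z, 0 ≤ v z) →
      ∀ z, v z ≤ pathB I m v z ∧ 0 ≤ pathB I m v z := by
  induction m with
  | nil => intro v h z; exact ⟨le_refl _, h z⟩
  | cons a m ih =>
    intro v h z
    have h' : ∀ z, 0 ≤ arrowB I a v z := fun z => le_trans (h z) (le_arrowB a h z)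
    have h2 := ih h' z
    rw [pathB_cons]
    exact ⟨le_trans (le_arrowB a h z) h2.1, h2.2⟩

private lemma arrowB_sym (a : Arrow d I) {v : Letter d → ℝ} (h : Sym I v) :
    Sym I (arrowB I a v) := by
  intro x
  simp only [arrowB, h x]
  congr 1
  refine if_congr ?_ rfl rfl
  constructor
  · rintro (h1 | h1)
    · right; rw [← h1, I.invol]
    · left; exact i_inj I h1
  · rintro (h1 | h1)
    · right; rw [h1]
    · left; rw [h1, I.invol]

private lemma pathB_sym (m : List (Arrow d I)) :
    ∀ {v : Letter d → ℝ}, Sym I v → Sym I (pathB I m v) := by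
  induction m with
  | nil => intro v h; exact h
  | cons a m ih => intro v h; rw [pathB_cons]; exact ih (arrowB_sym a h)

private noncomputable def sset (I : Inv d) (v0 : Letter d → ℝ) (p : List (Arrow d I)) :
    Finset (Letter d) :=
  univ.filter fun x => 0 < pathB I p v0 x

private lemma mem_sset {v0 : Letter d → ℝ} {p : List (Arrow d I)} {x : Letter d} :
    x ∈ sset I v0 p ↔ 0 < pathB I p v0 x := by
  simp [sset]

private lemma sset_mono {v0 : Letter d → ℝ} (h0 : ∀ z, 0 ≤ v0 z)
    (p q : List (Arrow d I)) : sset I v0 p ⊆ sset I v0 (p ++ q) := by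
  intro x hx
  rw [mem_sset] at hx ⊢
  rw [pathB_append]
  exact lt_of_lt_of_le hx ((pathB_mono q (fun z => (pathB_mono p h0 z).2) x).1)

private lemma sset_iclosed {v0 : Letter d → ℝ} (hsym : Sym I v0) (p : List (Arrow d I))
    {x : Letter d} : x ∈ sset I v0 p ↔ I.i x ∈ sset I v0 p := by
  rw [mem_sset, mem_sset, pathB_sym p hsym x]

private lemma loser_mem_of_const {v0 : Letter d → ℝ} (h0 : ∀ z, 0 ≤ v0 z)
    {p m : List (Arrow d I)}
    (heq : sset I v0 (p ++ m) = sset I v0 p) {a : Arrow d I} (ham : a ∈ m)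
    (hw : a.winner ∈ sset I v0 p) : a.loser ∈ sset I v0 p := by
  obtain ⟨u, u', rfl⟩ := List.append_of_mem ham
  have h1 : a.winner ∈ sset I v0 (p ++ u) := sset_mono h0 p u hw
  have h2 : a.loser ∈ sset I v0 ((p ++ u) ++ [a]) := by
    rw [mem_sset, pathB_append]
    have hwpos : 0 < pathB I (p ++ u) v0 a.winner := mem_sset.mp h1
    have hlnn : 0 ≤ pathB I (p ++ u) v0 a.loser := (pathB_mono (p ++ u) h0 _).2
    have hval : pathB I [a] (pathB I (p ++ u) v0) a.loser
        = pathB I (p ++ u) v0 a.loser + pathB I (p ++ u) v0 a.winner := by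
      simp [pathB, arrowB]
    rw [hval]
    linarith
  have h3 : a.loser ∈ sset I v0 (((p ++ u) ++ [a]) ++ u') := sset_mono h0 _ u' h2
  have hl : ((p ++ u) ++ [a]) ++ u' = p ++ (u ++ a :: u') := by simp
  rw [hl, heq] at h3
  exact h3

private lemma backprop (S : Finset (Letter d)) :
    ∀ (m : List (Arrow d I)) (b : Arrow d I),
      List.Chain' (fun a b => a.dst = b.src) (m ++ [b]) →
      (∀ c ∈ m ++ [b], c.winner ∈ S → c.loser ∈ S) →
      b.winner ∈ S → ∀ a ∈ m, a.winner ∈ S := by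
  intro m
  induction m using List.reverseRecOn with
  | nil => intro b _ _ _ a ha; simp at ha
  | append_singleton m c ih =>
    intro b hch hcl hbw a ha
    have hrel : c.dst = b.src := by
      have h := List.isChain_append.mp hch
      exact h.2.2 c (by simp) b (by simp)
    have hcw : c.winner ∈ S := by
      rcases winner_mem_next c b hrel with h | h
      · rw [h]; exact hbw
      · rw [h]; exact hcl b (by simp) hbw
    rcases List.mem_append.mp ha with h | h
    · refine ih c (List.isChain_append.mp hch).1 ?_ hcw a h
      intro x hx hxx
      refine hcl x ?_ hxx
      simp only [List.mem_append, List.mem_singleton] at hx ⊢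
      tauto
    · rw [List.mem_singleton.mp h]; exact hcw

private lemma pair_lemma {v0 : Letter d → ℝ} (h0 : ∀ z, 0 ≤ v0 z) (hsym : Sym I v0)
    {y : Letter d} (hy : 0 < v0 y) (p s t : List (Arrow d I))
    (hs : CompletePath I s) (ht : CompletePath I t)
    (hch : List.Chain' (fun a b => a.dst = b.src) (s ++ t))
    (heq : sset I v0 (p ++ (s ++ t)) = sset I v0 p) :
    ∀ x, x ∈ sset I v0 p := by
  have hyS : y ∈ sset I v0 p := mem_sset.mpr (lt_of_lt_of_le hy (pathB_mono p h0 y).1)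
  obtain ⟨b, hbt, hbw⟩ := ht y
  have hbS : b.winner ∈ sset I v0 p := by
    rcases hbw with h | h <;> rw [h]
    · exact hyS
    · exact (sset_iclosed hsym p).mp hyS
  obtain ⟨t₁, t₂, rfl⟩ := List.append_of_mem hbt
  have hch' : List.Chain' (fun a b => a.dst = b.src) ((s ++ t₁) ++ [b]) := by
    have hre : s ++ (t₁ ++ b :: t₂) = ((s ++ t₁) ++ [b]) ++ t₂ := by simp
    rw [hre] at hch
    exact (List.isChain_append.mp hch).1
  have hcl : ∀ c ∈ (s ++ t₁) ++ [b], c.winner ∈ sset I v0 p → c.loser ∈ sset I v0 p := by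
    intro c hc hcw
    refine loser_mem_of_const h0 heq ?_ hcw
    simp only [List.mem_append, List.mem_singleton, List.mem_cons] at hc ⊢
    tauto
  have hwin := backprop (sset I v0 p) (s ++ t₁) b hch' hcl hbS
  intro x
  obtain ⟨a, has, haw⟩ := hs x
  have haS : a.winner ∈ sset I v0 p := hwin a (List.mem_append_left t₁ has)
  rcases haw with h | h
  · rw [← h]; exact haS
  · exact (sset_iclosed hsym p).mpr (by rw [← h]; exact haS)

private lemma step2 {v0 : Letter d → ℝ} (h0 : ∀ z, 0 ≤ v0 z) (hsym : Sym I v0)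
    {y : Letter d} (hy : 0 < v0 y) (p s t : List (Arrow d I))
    (hs : CompletePath I s) (ht : CompletePath I t)
    (hch : List.Chain' (fun a b => a.dst = b.src) (s ++ t)) :
    (∀ x, x ∈ sset I v0 p) ∨
      (sset I v0 p).card + 2 ≤ (sset I v0 (p ++ (s ++ t))).card := by
  by_cases heq : sset I v0 (p ++ (s ++ t)) = sset I v0 p
  · exact Or.inl (pair_lemma h0 hsym hy p s t hs ht hch heq)
  · right
    have hsub : sset I v0 p ⊆ sset I v0 (p ++ (s ++ t)) := sset_mono h0 p _
    obtain ⟨x, hx1, hx2⟩ := Finset.exists_of_ssubset (lt_of_le_of_ne hsub (Ne.symm heq))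
    have hix1 : I.i x ∈ sset I v0 (p ++ (s ++ t)) := (sset_iclosed hsym _).mp hx1
    have hix2 : I.i x ∉ sset I v0 p := fun h => hx2 ((sset_iclosed hsym p).mpr h)
    have hne : x ≠ I.i x := Ne.symm (I.nofix x)
    have hcard : (insert x (insert (I.i x) (sset I v0 p))).card = (sset I v0 p).card + 2 := by
      rw [Finset.card_insert_of_notMem (by simp [Finset.mem_insert, hne, hx2]),
        Finset.card_insert_of_notMem hix2]
    have hsubset : insert x (insert (I.i x) (sset I v0 p)) ⊆ sset I v0 (p ++ (s ++ t)) :=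
      Finset.insert_subset_iff.mpr ⟨hx1, Finset.insert_subset_iff.mpr ⟨hix1, hsub⟩⟩
    rw [← hcard]
    exact Finset.card_le_card hsubset

private lemma rec_main {v0 : Letter d → ℝ} (h0 : ∀ z, 0 ≤ v0 z) (hsym : Sym I v0)
    {y : Letter d} (hy : 0 < v0 y) :
    ∀ (k : ℕ) (ms : List (List (Arrow d I))) (p : List (Arrow d I)),
      ms.length = 2 * k → (∀ s ∈ ms, CompletePath I s) →
      List.Chain' (fun a b => a.dst = b.src) (p ++ ms.flatten) →
      (∀ x, x ∈ sset I v0 (p ++ ms.flatten)) ∨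
        (sset I v0 p).card + 2 * k ≤ (sset I v0 (p ++ ms.flatten)).card := by
  intro k
  induction k with
  | zero =>
    intro ms p hlen _ _
    have hnil : ms = [] := List.length_eq_zero_iff.mp (by omega)
    subst hnil
    right
    simp
  | succ k ih =>
    intro ms p hlen hcmp hch
    obtain ⟨s, t, ms', rfl⟩ : ∃ s t ms', ms = s :: t :: ms' := by
      match ms with
      | s :: t :: ms' => exact ⟨s, t, ms', rfl⟩
      | [] => simp at hlen
      | [s] => simp at hlen; omega
    have hleq : p ++ (s :: t :: ms').flatten = (p ++ (s ++ t)) ++ ms'.flatten := by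
      simp
    have hchst : List.Chain' (fun a b => a.dst = b.src) (s ++ t) := by
      have hre : p ++ (s :: t :: ms').flatten = p ++ ((s ++ t) ++ ms'.flatten) := by simp
      rw [hre] at hch
      exact (List.isChain_append.mp (List.isChain_append.mp hch).2.1).1
    rcases step2 h0 hsym hy p s t (hcmp s (by simp)) (hcmp t (by simp)) hchst with hall | hcard
    · left
      intro x
      exact sset_mono h0 p _ (hall x)
    · have hch2 : List.Chain' (fun a b => a.dst = b.src)
          ((p ++ (s ++ t)) ++ ms'.flatten) := by rw [← hleq]; exact hch
      have hlen' : ms'.length = 2 * k := by simp at hlen; omega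
      have hcmp' : ∀ u ∈ ms', CompletePath I u := fun u hu => hcmp u (by simp [hu])
      rcases ih ms' (p ++ (s ++ t)) hlen' hcmp' hch2 with hall | hle
      · left
        intro x
        have hx := hall x
        rwa [← hleq] at hx
      · right
        rw [hleq]
        omega

private lemma init_lemma {v0 : Letter d → ℝ} (h0 : ∀ z, 0 ≤ v0 z) (hsym : Sym I v0)
    {y : Letter d} (hy : 0 < v0 y) (s : List (Arrow d I)) (hs : CompletePath I s) :
    4 ≤ (sset I v0 s).card := by
  obtain ⟨b, hbs, hbw⟩ := hs y
  have hwpos : 0 < v0 b.winner := by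
    rcases hbw with h | h <;> rw [h]
    · exact hy
    · rw [hsym]; exact hy
  obtain ⟨u, u', rfl⟩ := List.append_of_mem hbs
  have hyS : y ∈ sset I v0 (u ++ b :: u') :=
    mem_sset.mpr (lt_of_lt_of_le hy (pathB_mono _ h0 y).1)
  have hiyS : I.i y ∈ sset I v0 (u ++ b :: u') := (sset_iclosed hsym _).mp hyS
  have hlS : b.loser ∈ sset I v0 (u ++ b :: u') := by
    have h1 : 0 < pathB I (u ++ [b]) v0 b.loser := by
      rw [pathB_append]
      have hw : 0 < pathB I u v0 b.winner := lt_of_lt_of_le hwpos (pathB_mono u h0 _).1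
      have hl : 0 ≤ pathB I u v0 b.loser := (pathB_mono u h0 _).2
      have hval : pathB I [b] (pathB I u v0) b.loser
          = pathB I u v0 b.loser + pathB I u v0 b.winner := by
        simp [pathB, arrowB]
      rw [hval]
      linarith
    have h2 := sset_mono h0 (u ++ [b]) u' (mem_sset.mpr h1)
    rwa [show (u ++ [b]) ++ u' = u ++ b :: u' by simp] at h2
  have hilS : I.i b.loser ∈ sset I v0 (u ++ b :: u') := (sset_iclosed hsym _).mp hlS
  obtain ⟨hne1, hne2⟩ := loser_ne_winner b
  have hly1 : b.loser ≠ y := by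
    rcases hbw with h | h
    · rw [← h]; exact hne1
    · intro hh; apply hne2; rw [hh, h, I.invol]
  have hly2 : b.loser ≠ I.i y := by
    rcases hbw with h | h
    · intro hh; apply hne2; rw [hh, h]
    · rw [← h]; exact hne1
  have hily1 : I.i b.loser ≠ y := by
    intro hh; apply hly2; rw [← hh, I.invol]
  have hily2 : I.i b.loser ≠ I.i y := fun hh => hly1 (i_inj I hh)
  have hyiy : y ≠ I.i y := Ne.symm (I.nofix y)
  have hlil : b.loser ≠ I.i b.loser := Ne.symm (I.nofix b.loser)
  have hsubF : ({y, I.i y, b.loser, I.i b.loser} : Finset (Letter d))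
      ⊆ sset I v0 (u ++ b :: u') := by
    refine Finset.insert_subset_iff.mpr ⟨hyS, ?_⟩
    refine Finset.insert_subset_iff.mpr ⟨hiyS, ?_⟩
    refine Finset.insert_subset_iff.mpr ⟨hlS, ?_⟩
    simpa using hilS
  have hcF : ({y, I.i y, b.loser, I.i b.loser} : Finset (Letter d)).card = 4 := by
    rw [Finset.card_insert_of_notMem
        (by simp [Finset.mem_insert, hyiy, Ne.symm hly1, Ne.symm hily1]),
      Finset.card_insert_of_notMem
        (by simp [Finset.mem_insert, Ne.symm hly2, Ne.symm hily2]),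
      Finset.card_insert_of_notMem (by simp [hlil]),
      Finset.card_singleton]
  rw [← hcF]
  exact Finset.card_le_card hsubF

end PositivityProof
/-- In a Rauzy class with involution on an alphabet with `d` involution classes, every
`(2d−3)`-complete path is positive: the matrix `B_γ` has all entries strictly positive. -/
theorem kComplete_path_positive
    {d : ℕ} (hd : 2 ≤ d) (I : Inv d) (R : Set (RPerm d)) (hR : IsRauzyClass I R)
    (l : List (Arrow d I)) (hpath : IsPathList I l)
    (hin : ∀ a ∈ l, a.src ∈ R ∧ a.dst ∈ R)
    (hcomp : KComplete I (2*d - 3) l) :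
    PositivePath I l := by
  intro x y
  obtain ⟨ls, hlen, hfl, hcompl⟩ := hcomp
  subst hfl
  have h0 : ∀ z, 0 ≤ classBasis I y z := by
    intro z
    simp only [classBasis]
    split <;> norm_num
  have hsym : Sym I (classBasis I y) := by
    intro z
    simp only [classBasis]
    refine if_congr ?_ rfl rfl
    constructor
    · rintro (h | h)
      · right; rw [← h, I.invol]
      · left; exact i_inj I h
    · rintro (h | h)
      · right; rw [h]
      · left; rw [h, I.invol]
  have hy : 0 < classBasis I y y := by simp [classBasis]
  obtain ⟨s, rest, rfl⟩ : ∃ s rest, ls = s :: rest := by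
    match ls with
    | [] => exfalso; simp at hlen; omega
    | s :: rest => exact ⟨s, rest, rfl⟩
  have hrlen : rest.length = 2 * (d - 2) := by
    simp at hlen; omega
  have hch : List.Chain' (fun a b => a.dst = b.src) (s ++ rest.flatten) := by
    have h := hpath
    unfold IsPathList at h
    simpa using h
  have h4 := init_lemma h0 hsym hy s (hcompl s (by simp))
  rw [List.flatten_cons]
  rcases rec_main h0 hsym hy (d - 2) rest s hrlen
      (fun u hu => hcompl u (by simp [hu])) hch with hall | hcard
  · exact mem_sset.mp (hall x)
  · have hcup : (sset I (classBasis I y) (s ++ rest.flatten)).card ≤ 2 * d := by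
      have h := Finset.card_le_univ (sset I (classBasis I y) (s ++ rest.flatten))
      simpa using h
    have h2d : (sset I (classBasis I y) (s ++ rest.flatten)).card = 2 * d := by omega
    have huniv : sset I (classBasis I y) (s ++ rest.flatten) = univ :=
      Finset.eq_univ_of_card _ (by simpa using h2d)
    have hx : x ∈ sset I (classBasis I y) (s ++ rest.flatten) := huniv ▸ Finset.mem_univ x
    exact mem_sset.mp hx

end Rauzy
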